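/- For each v ≥ 0, the minimum of 2·cosh(v)·a₁ + a₀ over a₁, a₀ ≥ 0 subject to the constraint 2·cosh(s)·a₁ + a₀ ≥ s² for all real s is at most ⌈v⌉₀², where ⌈v⌉₀ = max(ι₀, v) and ι₀ > 0 is the unique positive solution of 2·coth(x) = x. Specifically, the choice a₁ = ⌈v⌉₀·csch(⌈v⌉₀) and a₀ = max(0, v(v − 2coth(v))) is feasible and achieves objective value at most ⌈v⌉₀². -/

import Mathlib

noncomputable section

/-- `sinh x ≤ x cosh x` for `x ≥ 0`. -/
lemma lemA {x : ℝ} (hx : 0 ≤ x) : Real.sinh x ≤ x * Real.cosh x := by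
  have hD : ∀ y : ℝ, HasDerivAt (fun t => t * Real.cosh t - Real.sinh t)
      (y * Real.sinh y) y := by
    intro y
    have h := ((hasDerivAt_id y).mul (Real.hasDerivAt_cosh y)).sub (Real.hasDerivAt_sinh y)
    refine h.congr_deriv ?_
    simp only [id_eq]
    ring
  have mono : MonotoneOn (fun t => t * Real.cosh t - Real.sinh t) (Set.Ici (0:ℝ)) := by
    apply monotoneOn_of_deriv_nonneg (convex_Ici 0)
    · exact ((continuous_id.mul Real.continuous_cosh).sub Real.continuous_sinh).continuousOn
    · intro y _; exact (hD y).differentiableAt.differentiableWithinAt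
    · intro y hy
      rw [interior_Ici, Set.mem_Ioi] at hy
      rw [(hD y).deriv]
      exact mul_nonneg hy.le (Real.sinh_nonneg_iff.2 hy.le)
  have h0 := mono (Set.self_mem_Ici) (Set.mem_Ici.2 hx) hx
  simp only [Real.cosh_zero, Real.sinh_zero, mul_one, zero_mul, sub_zero] at h0
  linarith

/-- `x ↦ x sinh x - 2 cosh x` is monotone on `[0, ∞)`. -/
lemma lemQ : MonotoneOn (fun t => t * Real.sinh t - 2 * Real.cosh t) (Set.Ici (0:ℝ)) := by
  have hD : ∀ y : ℝ, HasDerivAt (fun t => t * Real.sinh t - 2 * Real.cosh t)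
      (y * Real.cosh y - Real.sinh y) y := by
    intro y
    have h := ((hasDerivAt_id y).mul (Real.hasDerivAt_sinh y)).sub
      ((Real.hasDerivAt_cosh y).const_mul 2)
    refine h.congr_deriv ?_
    simp only [id_eq]
    ring
  apply monotoneOn_of_deriv_nonneg (convex_Ici 0)
  · exact ((continuous_id.mul Real.continuous_sinh).sub
      (continuous_const.mul Real.continuous_cosh)).continuousOn
  · intro y _; exact (hD y).differentiableAt.differentiableWithinAt
  · intro y hy
    rw [interior_Ici, Set.mem_Ioi] at hy
    rw [(hD y).deriv]
    linarith [lemA hy.le]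

/-- `sinh x / x` is monotone: `y sinh x ≤ x sinh y` for `0 < x ≤ y`. -/
lemma lemB {x y : ℝ} (hx : 0 < x) (hxy : x ≤ y) : y * Real.sinh x ≤ x * Real.sinh y := by
  have hd : 0 ≤ y - x := by linarith
  have h1 : Real.sinh y = Real.sinh x * Real.cosh (y - x) + Real.cosh x * Real.sinh (y - x) := by
    have := Real.sinh_add x (y - x)
    rw [show x + (y - x) = y by ring] at this
    exact this
  have h2 := lemA hx.le
  have h3 : (y - x) ≤ Real.sinh (y - x) := Real.self_le_sinh_iff.2 hd
  have h4 : (1:ℝ) ≤ Real.cosh (y - x) := Real.one_le_cosh _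
  have h5 : 0 ≤ Real.sinh x := Real.sinh_nonneg_iff.2 hx.le
  have h6 : 0 ≤ Real.sinh (y - x) := Real.sinh_nonneg_iff.2 hd
  nlinarith [mul_nonneg (mul_nonneg hx.le h5) (sub_nonneg.2 h4),
    mul_nonneg h5 (sub_nonneg.2 h3), mul_nonneg (sub_nonneg.2 h2) h6]

/-- Key inequality: `(s² - m²) sinh m ≤ 2 m (cosh s - cosh m)` for `m > 0`. -/
lemma lemKey {m : ℝ} (hm : 0 < m) (s : ℝ) :
    (s ^ 2 - m ^ 2) * Real.sinh m ≤ 2 * m * (Real.cosh s - Real.cosh m) := by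
  -- reduce to s ≥ 0
  wlog hs : 0 ≤ s with H
  · have := H hm (-s) (by linarith [le_of_not_ge hs])
    simpa [Real.cosh_neg] using this
  set a := (s + m) / 2 with ha
  set b := (s - m) / 2 with hb
  have hapos : 0 < a := by rw [ha]; positivity
  have hid : Real.cosh s - Real.cosh m = 2 * Real.sinh a * Real.sinh b := by
    rw [show s = a + b by rw [ha, hb]; ring, show m = a - b by rw [ha, hb]; ring,
      Real.cosh_add, Real.cosh_sub]
    ring
  have hm' : m = a - b := by rw [ha, hb]; ring
  have hsq : s ^ 2 - m ^ 2 = 4 * a * b := by rw [ha, hb]; ring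
  rw [hid, hsq]
  rcases le_or_gt 0 b with hb0 | hb0
  · -- b ≥ 0 : use lemB with (a - b, a)
    have h1 : a * Real.sinh (a - b) ≤ (a - b) * Real.sinh a := by
      apply lemB (by linarith [hm'] : (0:ℝ) < a - b) (by linarith)
    have h2 : b ≤ Real.sinh b := Real.self_le_sinh_iff.2 hb0
    have h3 : 0 ≤ Real.sinh (a - b) := Real.sinh_nonneg_iff.2 (by linarith [hm'])
    have h4 : 0 < Real.sinh a := Real.sinh_pos_iff.2 hapos
    have e1 : b * (a * Real.sinh (a - b)) ≤ b * ((a - b) * Real.sinh a) :=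
      mul_le_mul_of_nonneg_left h1 hb0
    have e2 : ((a - b) * Real.sinh a) * b ≤ ((a - b) * Real.sinh a) * Real.sinh b :=
      mul_le_mul_of_nonneg_left h2 (mul_nonneg (by linarith [hm']) h4.le)
    rw [hm']
    nlinarith [e1, e2]
  · -- b < 0
    obtain ⟨c, hc, hbc⟩ : ∃ c : ℝ, 0 < c ∧ b = -c := ⟨-b, by linarith, by ring⟩
    rw [hm', hbc]
    simp only [Real.sinh_neg, sub_neg_eq_add]
    have h1 := lemA hapos.le
    have h2 := lemA hc.le
    have h3 : Real.sinh (a + c) = Real.sinh a * Real.cosh c + Real.cosh a * Real.sinh c :=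
      Real.sinh_add a c
    have h4 : 0 ≤ Real.sinh a := Real.sinh_nonneg_iff.2 hapos.le
    have h5 : 0 ≤ Real.sinh c := Real.sinh_nonneg_iff.2 hc.le
    have key : 4 * a * c * Real.sinh (a + c) - 4 * (a + c) * Real.sinh a * Real.sinh c
        = 4 * a * Real.sinh a * (c * Real.cosh c - Real.sinh c)
          + 4 * c * Real.sinh c * (a * Real.cosh a - Real.sinh a) := by
      rw [h3]; ring
    nlinarith [key, mul_nonneg (mul_nonneg hapos.le h4) (sub_nonneg.2 h2),
      mul_nonneg (mul_nonneg hc.le h5) (sub_nonneg.2 h1)]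

theorem stmt17 (ι₀ : ℝ) (hι₀pos : 0 < ι₀)
    (hι₀ : 2 * (Real.cosh ι₀ / Real.sinh ι₀) = ι₀)
    (v : ℝ) (hv : 0 ≤ v) :
    0 ≤ max ι₀ v / Real.sinh (max ι₀ v) ∧
    0 ≤ max 0 (v * (v - 2 * (Real.cosh v / Real.sinh v))) ∧
    (∀ s : ℝ, s ^ 2 ≤ 2 * Real.cosh s * (max ι₀ v / Real.sinh (max ι₀ v)) +
        max 0 (v * (v - 2 * (Real.cosh v / Real.sinh v)))) ∧
    2 * Real.cosh v * (max ι₀ v / Real.sinh (max ι₀ v)) +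
        max 0 (v * (v - 2 * (Real.cosh v / Real.sinh v)))
      ≤ (max ι₀ v) ^ 2 := by
  set m := max ι₀ v with hmdef
  have hmpos : 0 < m := lt_of_lt_of_le hι₀pos (le_max_left _ _)
  have hsm : 0 < Real.sinh m := Real.sinh_pos_iff.2 hmpos
  have hsι : 0 < Real.sinh ι₀ := Real.sinh_pos_iff.2 hι₀pos
  have hιeq : 2 * Real.cosh ι₀ = ι₀ * Real.sinh ι₀ := by
    field_simp at hι₀
    linarith
  set A := max 0 (v * (v - 2 * (Real.cosh v / Real.sinh v))) with hA
  have hA0 : 0 ≤ A := le_max_left _ _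
  -- A ≥ m² - 2 m cosh m / sinh m
  have hAge : m ^ 2 - 2 * m * (Real.cosh m / Real.sinh m) ≤ A := by
    rcases le_total v ι₀ with h | h
    · have hmι : m = ι₀ := max_eq_left h
      rw [hmι]
      have : ι₀ ^ 2 - 2 * ι₀ * (Real.cosh ι₀ / Real.sinh ι₀) = 0 := by
        have : 2 * ι₀ * (Real.cosh ι₀ / Real.sinh ι₀) = ι₀ * (2 * (Real.cosh ι₀ / Real.sinh ι₀)) := by
          ring
        rw [this, hι₀]
        ring
      rw [this]
      exact hA0
    · have hmv : m = v := max_eq_right h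
      rw [hmv, hA]
      have : v ^ 2 - 2 * v * (Real.cosh v / Real.sinh v)
          = v * (v - 2 * (Real.cosh v / Real.sinh v)) := by ring
      rw [this]
      exact le_max_right _ _
  refine ⟨div_nonneg hmpos.le hsm.le, hA0, ?_, ?_⟩
  · -- feasibility
    intro s
    have hkey := lemKey hmpos s
    have h2 : 2 * Real.cosh s * (m / Real.sinh m)
        + (m ^ 2 - 2 * m * (Real.cosh m / Real.sinh m)) - s ^ 2
        = (2 * m * (Real.cosh s - Real.cosh m) - (s ^ 2 - m ^ 2) * Real.sinh m)
          / Real.sinh m := by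
      field_simp
      ring
    have h3 : 0 ≤ (2 * m * (Real.cosh s - Real.cosh m) - (s ^ 2 - m ^ 2) * Real.sinh m)
        / Real.sinh m := div_nonneg (by linarith) hsm.le
    linarith [h2 ▸ h3]
  · -- objective
    rcases le_total v ι₀ with h | h
    · have hmι : m = ι₀ := max_eq_left h
      have hAzero : A = 0 := by
        rw [hA]
        apply max_eq_left
        rcases eq_or_lt_of_le hv with h0 | h0
        · simp [← h0]
        · have hsv : 0 < Real.sinh v := Real.sinh_pos_iff.2 h0
          have hq := lemQ (Set.mem_Ici.2 hv) (Set.mem_Ici.2 hι₀pos.le) h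
          simp only at hq
          -- v sinh v - 2 cosh v ≤ ι₀ sinh ι₀ - 2 cosh ι₀ = 0
          have hqv : v * Real.sinh v - 2 * Real.cosh v ≤ 0 := by
            have : ι₀ * Real.sinh ι₀ - 2 * Real.cosh ι₀ = 0 := by linarith
            linarith
          have : v - 2 * (Real.cosh v / Real.sinh v)
              = (v * Real.sinh v - 2 * Real.cosh v) / Real.sinh v := by
            field_simp
          rw [this]
          exact mul_nonpos_of_nonneg_of_nonpos hv (div_nonpos_of_nonpos_of_nonneg hqv hsv.le)
      rw [hAzero, hmι, add_zero]
      have hcosh : Real.cosh v ≤ Real.cosh ι₀ := by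
        rw [Real.cosh_le_cosh, abs_of_nonneg hv, abs_of_nonneg hι₀pos.le]
        exact h
      have hpos : 0 ≤ ι₀ / Real.sinh ι₀ := div_nonneg hι₀pos.le hsι.le
      calc 2 * Real.cosh v * (ι₀ / Real.sinh ι₀)
          ≤ 2 * Real.cosh ι₀ * (ι₀ / Real.sinh ι₀) := by nlinarith
        _ = ι₀ * (2 * (Real.cosh ι₀ / Real.sinh ι₀)) := by ring
        _ = ι₀ ^ 2 := by rw [hι₀]; ring
    · have hmv : m = v := max_eq_right h
      have h0 : 0 < v := lt_of_lt_of_le hι₀pos h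
      have hsv : 0 < Real.sinh v := Real.sinh_pos_iff.2 h0
      have hq := lemQ (Set.mem_Ici.2 hι₀pos.le) (Set.mem_Ici.2 h0.le) h
      simp only at hq
      have hqv : 0 ≤ v * Real.sinh v - 2 * Real.cosh v := by
        have : ι₀ * Real.sinh ι₀ - 2 * Real.cosh ι₀ = 0 := by linarith
        linarith
      have hApos : A = v * (v - 2 * (Real.cosh v / Real.sinh v)) := by
        rw [hA]
        apply max_eq_right
        have : v - 2 * (Real.cosh v / Real.sinh v)
            = (v * Real.sinh v - 2 * Real.cosh v) / Real.sinh v := by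
          field_simp
        rw [this]
        exact mul_nonneg hv (div_nonneg hqv hsv.le)
      rw [hApos, hmv]
      apply le_of_eq
      field_simp
      ring
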